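/- Let η = diag(1, 2, 2) ∈ GL₃(ℚ₂) and let L ⊆ GL₃(ℤ₂) be the parahoric subgroup of matrices whose reduction mod 2 has first column of the form (*,0,0)ᵀ. Then L ∩ ηLη⁻¹ is the subgroup of matrices in L whose first column reduces to (*,0,0)ᵀ mod 4, and this subgroup has index 4 in L. -/

import Mathlib

open Matrix

noncomputable section Parahoric122Aux

/-- reduction mod 4 -/
abbrev pi4 : ℤ_[2] →+* ZMod (2 ^ 2) := PadicInt.toZModPow 2

/-- inclusion of integral matrix groups -/
abbrev iota : GL (Fin 3) ℤ_[2] →* GL (Fin 3) ℚ_[2] :=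
  Matrix.GeneralLinearGroup.map (PadicInt.Coe.ringHom : ℤ_[2] →+* ℚ_[2])

lemma coeInj : Function.Injective (PadicInt.Coe.ringHom : ℤ_[2] →+* ℚ_[2]) :=
  Subtype.coe_injective

lemma iota_coe (h : GL (Fin 3) ℤ_[2]) :
    (iota h : Matrix (Fin 3) (Fin 3) ℚ_[2]) =
      (h : Matrix (Fin 3) (Fin 3) ℤ_[2]).map (PadicInt.Coe.ringHom : ℤ_[2] →+* ℚ_[2]) := rfl

lemma iota_inj : Function.Injective iota := by
  intro a b hab
  have h1 := congrArg Units.val hab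
  rw [iota_coe, iota_coe] at h1
  exact Units.ext (Matrix.map_injective coeInj h1)

lemma toZMod_eq_zero {x : ℤ_[2]} : PadicInt.toZMod x = 0 ↔ (2 : ℤ_[2]) ∣ x := by
  rw [← RingHom.mem_ker, PadicInt.ker_toZMod, PadicInt.maximalIdeal_eq_span_p,
    Ideal.mem_span_singleton]
  norm_num

lemma pi4_eq_zero {x : ℤ_[2]} : pi4 x = 0 ↔ (4 : ℤ_[2]) ∣ x := by
  rw [← RingHom.mem_ker, PadicInt.ker_toZModPow, Ideal.mem_span_singleton]
  norm_num

lemma isUnit_iff_not_dvd {x : ℤ_[2]} : IsUnit x ↔ ¬(2 : ℤ_[2]) ∣ x := by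
  rw [← @not_not (IsUnit x), PadicInt.not_isUnit_iff, PadicInt.norm_lt_one_iff_dvd]
  norm_num

lemma pi4_even {x : ℤ_[2]} (h : PadicInt.toZMod x = 0) : pi4 x = 0 ∨ pi4 x = 2 := by
  obtain ⟨y, hy⟩ := toZMod_eq_zero.mp h
  rw [hy, _root_.map_mul, map_ofNat]
  generalize pi4 y = t; revert t; decide

lemma pi4_even' {x : ℤ_[2]} (h : pi4 x = 0 ∨ pi4 x = 2) : PadicInt.toZMod x = 0 := by
  rw [toZMod_eq_zero]
  rcases h with h | h
  · exact dvd_trans ⟨2, by norm_num⟩ (pi4_eq_zero.mp h)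
  · have h2 : pi4 (x - 2) = 0 := by rw [map_sub, h, map_ofNat]; ring
    obtain ⟨y, hy⟩ := pi4_eq_zero.mp h2
    exact ⟨2 * y + 1, by ring_nf; linear_combination hy⟩

lemma isUnit_pi4 {x : ℤ_[2]} (h : IsUnit x) : pi4 x = 1 ∨ pi4 x = 3 := by
  obtain ⟨v, hv⟩ := h.exists_right_inv
  have h2 : pi4 x * pi4 v = 1 := by rw [← _root_.map_mul, hv, _root_.map_one]
  revert h2; generalize pi4 x = s; generalize pi4 v = t; revert s t; decide

set_option synthInstance.maxSize 2000 in
lemma S1' : ∀ a00 : ZMod 4, ∀ d e1 e2 : ZMod 4,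
    ∀ a10 : ZMod 4, (a10 = 0 ∨ a10 = 2) → ∀ a20 : ZMod 4, (a20 = 0 ∨ a20 = 2) →
    (a00 * d + a10 * e1 + a20 * e2 = 1 ∨ a00 * d + a10 * e1 + a20 * e2 = 3) →
    ((a00 = 1 ∨ a00 = 3) ∧ (d = 1 ∨ d = 3)) := by decide

set_option synthInstance.maxSize 2000 in
set_option maxHeartbeats 4000000 in
lemma score : ∀ b00 : ZMod 4, (b00 = 1 ∨ b00 = 3) →
    ∀ b10 : ZMod 4, (b10 = 0 ∨ b10 = 2) → ∀ b20 : ZMod 4, (b20 = 0 ∨ b20 = 2) →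
    ∀ a10 : ZMod 4, (a10 = 0 ∨ a10 = 2) → ∀ a20 : ZMod 4, (a20 = 0 ∨ a20 = 2) →
    ∀ a11 a12 a21 a22 : ZMod 4,
    (a11 * a22 - a12 * a21 = 1 ∨ a11 * a22 - a12 * a21 = 3) →
    ((b10 = 0 ∧ b20 = 0) ↔
      (a10 * b00 + a11 * b10 + a12 * b20 = a10 ∧ a20 * b00 + a21 * b10 + a22 * b20 = a20)) := by
  decide

def phi : ZMod (2 ^ 2) → ZMod 2 := fun t => if t = 2 then 1 else 0

lemma phi_eq : ∀ s t : ZMod (2 ^ 2), (s = 0 ∨ s = 2) → (t = 0 ∨ t = 2) →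
    (phi s = phi t ↔ s = t) := by unfold phi; decide

lemma key_block (A : GL (Fin 3) ℤ_[2])
    (h1 : PadicInt.toZMod ((A : Matrix (Fin 3) (Fin 3) ℤ_[2]) 1 0) = 0)
    (h2 : PadicInt.toZMod ((A : Matrix (Fin 3) (Fin 3) ℤ_[2]) 2 0) = 0) :
    (pi4 (A.val 0 0) = 1 ∨ pi4 (A.val 0 0) = 3) ∧
    (pi4 (A.val 1 1) * pi4 (A.val 2 2) - pi4 (A.val 1 2) * pi4 (A.val 2 1) = 1 ∨
     pi4 (A.val 1 1) * pi4 (A.val 2 2) - pi4 (A.val 1 2) * pi4 (A.val 2 1) = 3) := by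
  have hdet : IsUnit (A.val.det) := Matrix.isUnits_det_units A
  have hp := isUnit_pi4 hdet
  rw [Matrix.det_fin_three] at hp
  simp only [map_add, map_sub, _root_.map_mul] at hp
  refine S1' (pi4 (A.val 0 0))
    (pi4 (A.val 1 1) * pi4 (A.val 2 2) - pi4 (A.val 1 2) * pi4 (A.val 2 1))
    (pi4 (A.val 0 2) * pi4 (A.val 2 1) - pi4 (A.val 0 1) * pi4 (A.val 2 2))
    (pi4 (A.val 0 1) * pi4 (A.val 1 2) - pi4 (A.val 0 2) * pi4 (A.val 1 1))
    (pi4 (A.val 1 0)) (pi4_even h1) (pi4 (A.val 2 0)) (pi4_even h2) ?_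
  rcases hp with hp | hp
  · left; rw [← hp]; ring
  · right; rw [← hp]; ring

end Parahoric122Aux

section Part1

lemma backward_aux (η : GL (Fin 3) ℚ_[2])
    (hη : (η : Matrix (Fin 3) (Fin 3) ℚ_[2]) = Matrix.diagonal ![1, 2, 2])
    (h : GL (Fin 3) ℤ_[2]) (c1 c2 : ℤ_[2])
    (hc1 : (h : Matrix (Fin 3) (Fin 3) ℤ_[2]) 1 0 = 4 * c1)
    (hc2 : (h : Matrix (Fin 3) (Fin 3) ℤ_[2]) 2 0 = 4 * c2) :
    ∃ b : GL (Fin 3) ℤ_[2],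
      (∀ i : Fin 3, i ≠ 0 → PadicInt.toZMod ((b : Matrix (Fin 3) (Fin 3) ℤ_[2]) i 0) = 0) ∧
      (MulAut.conj η).toMonoidHom (iota b) = iota h := by
  obtain ⟨B, hBdef⟩ : ∃ B : Matrix (Fin 3) (Fin 3) ℤ_[2], B = Matrix.of
      ![![(h : Matrix (Fin 3) (Fin 3) ℤ_[2]) 0 0, 2 * (h : Matrix (Fin 3) (Fin 3) ℤ_[2]) 0 1,
          2 * (h : Matrix (Fin 3) (Fin 3) ℤ_[2]) 0 2],
        ![2 * c1, (h : Matrix (Fin 3) (Fin 3) ℤ_[2]) 1 1, (h : Matrix (Fin 3) (Fin 3) ℤ_[2]) 1 2],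
        ![2 * c2, (h : Matrix (Fin 3) (Fin 3) ℤ_[2]) 2 1, (h : Matrix (Fin 3) (Fin 3) ℤ_[2]) 2 2]] :=
    ⟨_, rfl⟩
  have key : (Matrix.diagonal ![1, 2, 2] : Matrix (Fin 3) (Fin 3) ℚ_[2]) *
      (B.map (PadicInt.Coe.ringHom : ℤ_[2] →+* ℚ_[2])) =
      ((h : Matrix (Fin 3) (Fin 3) ℤ_[2]).map (PadicInt.Coe.ringHom : ℤ_[2] →+* ℚ_[2])) *
        Matrix.diagonal ![1, 2, 2] := by
    ext i j
    rw [Matrix.diagonal_mul, Matrix.mul_diagonal, Matrix.map_apply, Matrix.map_apply, hBdef]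
    fin_cases i <;> fin_cases j <;> simp [hc1, hc2, map_ofNat] <;> ring
  have hdetB : IsUnit B.det := by
    have hdm : (B.map (PadicInt.Coe.ringHom : ℤ_[2] →+* ℚ_[2])).det =
        ((h : Matrix (Fin 3) (Fin 3) ℤ_[2]).map (PadicInt.Coe.ringHom : ℤ_[2] →+* ℚ_[2])).det := by
      have h3 := congrArg Matrix.det key
      rw [Matrix.det_mul, Matrix.det_mul, Matrix.det_diagonal] at h3
      have h4 : ∏ i, (![1, 2, 2] : Fin 3 → ℚ_[2]) i = 4 := by
        rw [Fin.prod_univ_three]; show (1 : ℚ_[2]) * 2 * 2 = 4; norm_num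
      rw [h4] at h3
      have h5 : (4 : ℚ_[2]) ≠ 0 := by norm_num
      rw [mul_comm] at h3
      exact mul_right_cancel₀ h5 (by linear_combination h3)
    have h6 : (PadicInt.Coe.ringHom : ℤ_[2] →+* ℚ_[2]) B.det =
        (PadicInt.Coe.ringHom : ℤ_[2] →+* ℚ_[2]) (h : Matrix (Fin 3) (Fin 3) ℤ_[2]).det := by
      rw [RingHom.map_det, RingHom.map_det]
      simpa [RingHom.mapMatrix_apply] using hdm
    rw [coeInj h6]
    exact Matrix.isUnits_det_units h
  refine ⟨Matrix.nonsingInvUnit B hdetB, ?_, ?_⟩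
  · have hbval : ((Matrix.nonsingInvUnit B hdetB : GL (Fin 3) ℤ_[2]) :
        Matrix (Fin 3) (Fin 3) ℤ_[2]) = B := rfl
    intro i hi
    rw [hbval, hBdef]
    fin_cases i
    · exact absurd rfl hi
    · exact toZMod_eq_zero.mpr ⟨c1, rfl⟩
    · exact toZMod_eq_zero.mpr ⟨c2, rfl⟩
  · simp only [MulEquiv.coe_toMonoidHom, MulAut.conj_apply]
    rw [mul_inv_eq_iff_eq_mul]
    apply Units.ext
    rw [Units.val_mul, Units.val_mul, hη, iota_coe, iota_coe]
    exact key

lemma part1 (η : GL (Fin 3) ℚ_[2]) (L : Subgroup (GL (Fin 3) ℚ_[2]))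
    (hη : (η : Matrix (Fin 3) (Fin 3) ℚ_[2]) = Matrix.diagonal ![1, 2, 2])
    (hL : ∀ g : GL (Fin 3) ℚ_[2], g ∈ L ↔
      ∃ h : GL (Fin 3) ℤ_[2],
        Matrix.GeneralLinearGroup.map (PadicInt.Coe.ringHom : ℤ_[2] →+* ℚ_[2]) h = g ∧
        ∀ i : Fin 3, i ≠ 0 → PadicInt.toZMod ((h : Matrix (Fin 3) (Fin 3) ℤ_[2]) i 0) = 0)
    (g : GL (Fin 3) ℚ_[2]) :
    g ∈ L ⊓ Subgroup.map (MulAut.conj η).toMonoidHom L ↔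
      ∃ h : GL (Fin 3) ℤ_[2], iota h = g ∧
        ∀ i : Fin 3, i ≠ 0 → pi4 ((h : Matrix (Fin 3) (Fin 3) ℤ_[2]) i 0) = 0 := by
  constructor
  · rintro ⟨hgL, hgC⟩
    obtain ⟨h, hh, hcond⟩ := (hL g).mp hgL
    refine ⟨h, hh, ?_⟩
    obtain ⟨a, haL, hac⟩ := Subgroup.mem_map.mp hgC
    obtain ⟨b, hb, hbcond⟩ := (hL a).mp haL
    have hac' : η * a = g * η := by
      rw [← hac]; simp only [MulEquiv.coe_toMonoidHom, MulAut.conj_apply]; group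
    have hm : (Matrix.diagonal ![1, 2, 2] : Matrix (Fin 3) (Fin 3) ℚ_[2]) *
        ((b : Matrix (Fin 3) (Fin 3) ℤ_[2]).map (PadicInt.Coe.ringHom : ℤ_[2] →+* ℚ_[2])) =
        ((h : Matrix (Fin 3) (Fin 3) ℤ_[2]).map (PadicInt.Coe.ringHom : ℤ_[2] →+* ℚ_[2])) *
          Matrix.diagonal ![1, 2, 2] := by
      have h2 := congrArg Units.val hac'
      rw [Units.val_mul, Units.val_mul, hη] at h2
      rw [← hb, ← hh, iota_coe, iota_coe] at h2
      exact h2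
    intro i hi
    have hi' := congrFun (congrFun hm i) 0
    rw [Matrix.diagonal_mul, Matrix.mul_diagonal] at hi'
    have hv2 : (![1, 2, 2] : Fin 3 → ℚ_[2]) i = 2 := by fin_cases i <;> simp_all
    have hv1 : (![1, 2, 2] : Fin 3 → ℚ_[2]) 0 = 1 := rfl
    rw [hv1, hv2, Matrix.map_apply, Matrix.map_apply, mul_one] at hi'
    have heq : (h : Matrix (Fin 3) (Fin 3) ℤ_[2]) i 0 =
        2 * (b : Matrix (Fin 3) (Fin 3) ℤ_[2]) i 0 := by
      apply coeInj
      rw [_root_.map_mul, ← hi', map_ofNat]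
    obtain ⟨c, hc⟩ := toZMod_eq_zero.mp (hbcond i hi)
    rw [pi4_eq_zero, heq, hc]
    exact ⟨c, by ring⟩
  · rintro ⟨h, rfl, hcond⟩
    obtain ⟨c1, hc1⟩ := pi4_eq_zero.mp (hcond 1 (by decide))
    obtain ⟨c2, hc2⟩ := pi4_eq_zero.mp (hcond 2 (by decide))
    have hmem : iota h ∈ L := (hL _).mpr ⟨h, rfl, fun i hi =>
      toZMod_eq_zero.mpr (dvd_trans ⟨2, by norm_num⟩ (pi4_eq_zero.mp (hcond i hi)))⟩
    obtain ⟨b, hbcond, hbc⟩ := backward_aux η hη h c1 c2 hc1 hc2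
    exact ⟨hmem, Subgroup.mem_map.mpr ⟨iota b, (hL _).mpr ⟨b, rfl, hbcond⟩, hbc⟩⟩

end Part1

section Part2

lemma part2 (η : GL (Fin 3) ℚ_[2]) (L : Subgroup (GL (Fin 3) ℚ_[2]))
    (hη : (η : Matrix (Fin 3) (Fin 3) ℚ_[2]) = Matrix.diagonal ![1, 2, 2])
    (hL : ∀ g : GL (Fin 3) ℚ_[2], g ∈ L ↔
      ∃ h : GL (Fin 3) ℤ_[2],
        Matrix.GeneralLinearGroup.map (PadicInt.Coe.ringHom : ℤ_[2] →+* ℚ_[2]) h = g ∧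
        ∀ i : Fin 3, i ≠ 0 → PadicInt.toZMod ((h : Matrix (Fin 3) (Fin 3) ℤ_[2]) i 0) = 0) :
    (Subgroup.map (MulAut.conj η).toMonoidHom L).relIndex L = 4 := by
  classical
  set H := Subgroup.map (MulAut.conj η).toMonoidHom L with hH
  set K := H.subgroupOf L with hK
  have lift_ex : ∀ x : L, ∃ h : GL (Fin 3) ℤ_[2], iota h = (x : GL (Fin 3) ℚ_[2]) ∧
      ∀ i : Fin 3, i ≠ 0 → PadicInt.toZMod ((h : Matrix (Fin 3) (Fin 3) ℤ_[2]) i 0) = 0 :=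
    fun x => (hL ↑x).mp x.2
  choose Af hAf hAcond using lift_ex
  set F : L → ZMod 2 × ZMod 2 := fun x =>
    (phi (pi4 ((Af x).val 1 0)), phi (pi4 ((Af x).val 2 0))) with hF
  -- coset criterion
  have coset : ∀ x y : L, (x⁻¹ * y ∈ K) ↔ F x = F y := by
    intro x y
    set z : L := x⁻¹ * y with hz
    have hABC : Af x * Af z = Af y := by
      apply iota_inj
      rw [MonoidHom.map_mul, hAf, hAf, hAf, hz]
      simp only [Subgroup.coe_mul, InvMemClass.coe_inv]
      group
    have hmemiff : (z ∈ K) ↔ ∀ i : Fin 3, i ≠ 0 → pi4 ((Af z).val i 0) = 0 := by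
      rw [hK, Subgroup.mem_subgroupOf]
      have h8 : ((z : GL (Fin 3) ℚ_[2]) ∈ H) ↔ ((z : GL (Fin 3) ℚ_[2]) ∈ L ⊓ H) := by
        constructor
        · intro hh; exact Subgroup.mem_inf.mpr ⟨z.2, hh⟩
        · intro hh; exact (Subgroup.mem_inf.mp hh).2
      rw [h8, hH, part1 η L hη hL]
      constructor
      · rintro ⟨h, hh, hcond⟩
        have h9 : h = Af z := iota_inj (by rw [hh, hAf])
        rwa [h9] at hcond
      · intro hc; exact ⟨Af z, hAf z, hc⟩
    have hent : ∀ i : Fin 3, pi4 ((Af y).val i 0) =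
        pi4 ((Af x).val i 0) * pi4 ((Af z).val 0 0) +
        pi4 ((Af x).val i 1) * pi4 ((Af z).val 1 0) +
        pi4 ((Af x).val i 2) * pi4 ((Af z).val 2 0) := by
      intro i
      have h7 : ((Af x).val * (Af z).val) i 0 = (Af y).val i 0 := by
        rw [← Units.val_mul, hABC]
      rw [Matrix.mul_apply, Fin.sum_univ_three] at h7
      rw [← h7, map_add, map_add, _root_.map_mul, _root_.map_mul, _root_.map_mul]
    obtain ⟨-, hxblock⟩ := key_block (Af x) (hAcond x 1 (by decide)) (hAcond x 2 (by decide))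
    obtain ⟨hz00, -⟩ := key_block (Af z) (hAcond z 1 (by decide)) (hAcond z 2 (by decide))
    have ha10 := pi4_even (hAcond x 1 (by decide))
    have ha20 := pi4_even (hAcond x 2 (by decide))
    have hb10 := pi4_even (hAcond z 1 (by decide))
    have hb20 := pi4_even (hAcond z 2 (by decide))
    have hc10 := pi4_even (hAcond y 1 (by decide))
    have hc20 := pi4_even (hAcond y 2 (by decide))
    have hs := score _ hz00 _ hb10 _ hb20 _ ha10 _ ha20
      (pi4 ((Af x).val 1 1)) (pi4 ((Af x).val 1 2))
      (pi4 ((Af x).val 2 1)) (pi4 ((Af x).val 2 2)) hxblock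
    rw [hmemiff]
    constructor
    · intro hcnd
      have hzz : ∀ i : Fin 3, i ≠ 0 → pi4 ((Af z).val i 0) = 0 := hcnd
      have h10 := hs.mp ⟨hzz 1 (by decide), hzz 2 (by decide)⟩
      have e1 : pi4 ((Af y).val 1 0) = pi4 ((Af x).val 1 0) := by rw [hent 1]; exact h10.1
      have e2 : pi4 ((Af y).val 2 0) = pi4 ((Af x).val 2 0) := by rw [hent 2]; exact h10.2
      simp only [hF]
      rw [e1, e2]
    · intro hFxy
      have e1 : pi4 ((Af x).val 1 0) = pi4 ((Af y).val 1 0) :=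
        (phi_eq _ _ ha10 hc10).mp (congrArg Prod.fst hFxy)
      have e2 : pi4 ((Af x).val 2 0) = pi4 ((Af y).val 2 0) :=
        (phi_eq _ _ ha20 hc20).mp (congrArg Prod.snd hFxy)
      have h11 := hs.mpr ⟨by rw [← hent 1]; exact e1.symm, by rw [← hent 2]; exact e2.symm⟩
      intro i hi
      fin_cases i
      · exact absurd rfl hi
      · exact h11.1
      · exact h11.2
  -- coset representatives
  have hrep : ∀ r : ZMod 2 × ZMod 2, ∃ x : L, F x = r := by
    intro r
    obtain ⟨N, hN⟩ : ∃ N : Matrix (Fin 3) (Fin 3) ℤ_[2], N = Matrix.of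
        ![![1, 0, 0], ![2 * ((r.1.val : ℕ) : ℤ_[2]), 1, 0],
          ![2 * ((r.2.val : ℕ) : ℤ_[2]), 0, 1]] := ⟨_, rfl⟩
    obtain ⟨N', hN'⟩ : ∃ N' : Matrix (Fin 3) (Fin 3) ℤ_[2], N' = Matrix.of
        ![![1, 0, 0], ![-(2 * ((r.1.val : ℕ) : ℤ_[2])), 1, 0],
          ![-(2 * ((r.2.val : ℕ) : ℤ_[2])), 0, 1]] := ⟨_, rfl⟩
    have hNN' : N * N' = 1 := by
      ext i j
      rw [Matrix.mul_apply, Fin.sum_univ_three, hN, hN']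
      fin_cases i <;> fin_cases j <;> simp [Matrix.one_apply]
    have hN'N : N' * N = 1 := by
      ext i j
      rw [Matrix.mul_apply, Fin.sum_univ_three, hN, hN']
      fin_cases i <;> fin_cases j <;> simp [Matrix.one_apply]
    obtain ⟨u, hu⟩ : ∃ u : GL (Fin 3) ℤ_[2], (u : Matrix (Fin 3) (Fin 3) ℤ_[2]) = N :=
      ⟨⟨N, N', hNN', hN'N⟩, rfl⟩
    have humem : iota u ∈ L := by
      refine (hL _).mpr ⟨u, rfl, ?_⟩
      intro i hi
      rw [hu, hN]
      fin_cases i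
      · exact absurd rfl hi
      · exact toZMod_eq_zero.mpr ⟨((r.1.val : ℕ) : ℤ_[2]), rfl⟩
      · exact toZMod_eq_zero.mpr ⟨((r.2.val : ℕ) : ℤ_[2]), rfl⟩
    refine ⟨⟨iota u, humem⟩, ?_⟩
    have hAfu : Af ⟨iota u, humem⟩ = u := iota_inj (by rw [hAf])
    have key2 : ∀ t : ZMod 2, phi (2 * ((t.val : ℕ) : ZMod (2 ^ 2))) = t := by decide
    simp only [hF, hAfu, hu, hN]
    have hc1 : pi4 (2 * ((r.1.val : ℕ) : ℤ_[2])) = 2 * ((r.1.val : ℕ) : ZMod (2 ^ 2)) := by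
      rw [_root_.map_mul, map_ofNat, map_natCast]
    have hc2 : pi4 (2 * ((r.2.val : ℕ) : ℤ_[2])) = 2 * ((r.2.val : ℕ) : ZMod (2 ^ 2)) := by
      rw [_root_.map_mul, map_ofNat, map_natCast]
    show (phi (pi4 (2 * ((r.1.val : ℕ) : ℤ_[2]))), phi (pi4 (2 * ((r.2.val : ℕ) : ℤ_[2])))) = r
    rw [hc1, hc2, key2, key2]
  -- build bijection
  choose rep hrepF using hrep
  have hbij : Function.Bijective
      (fun r : ZMod 2 × ZMod 2 => ((rep r : L ⧸ K) : L ⧸ K)) := by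
    constructor
    · intro r s hrs
      have h12 : (QuotientGroup.mk (rep r) : L ⧸ K) = QuotientGroup.mk (rep s) := hrs
      have h13 := (coset _ _).mp (QuotientGroup.eq.mp h12)
      rw [hrepF, hrepF] at h13
      exact h13
    · intro q
      refine QuotientGroup.induction_on q ?_
      intro x
      refine ⟨F x, ?_⟩
      show (QuotientGroup.mk (rep (F x)) : L ⧸ K) = QuotientGroup.mk x
      exact QuotientGroup.eq.mpr ((coset _ _).mpr (by rw [hrepF]))
  have hcard := Nat.card_eq_of_bijective _ hbij
  rw [Subgroup.relIndex, Subgroup.index_eq_card, ← hcard]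
  simp [Nat.card_eq_fintype_card]

end Part2


/-- Let `η = diag(1,2,2) ∈ GL₃(ℚ₂)` and let `L` be (the image in `GL₃(ℚ₂)` of) the
parahoric subgroup of `GL₃(ℤ₂)` of matrices whose first column reduces to `(*,0,0)ᵀ`
mod 2.  Then `L ∩ ηLη⁻¹` consists of those elements of `L` whose first column reduces
to `(*,0,0)ᵀ` mod 4, and this subgroup has index 4 in `L`. -/
theorem parahoric_conj_diag122 (η : GL (Fin 3) ℚ_[2]) (L : Subgroup (GL (Fin 3) ℚ_[2]))
    (hη : (η : Matrix (Fin 3) (Fin 3) ℚ_[2]) = Matrix.diagonal ![1, 2, 2])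
    (hL : ∀ g : GL (Fin 3) ℚ_[2], g ∈ L ↔
      ∃ h : GL (Fin 3) ℤ_[2],
        Matrix.GeneralLinearGroup.map (PadicInt.Coe.ringHom : ℤ_[2] →+* ℚ_[2]) h = g ∧
        ∀ i : Fin 3, i ≠ 0 → PadicInt.toZMod ((h : Matrix (Fin 3) (Fin 3) ℤ_[2]) i 0) = 0) :
    (∀ g : GL (Fin 3) ℚ_[2],
      g ∈ L ⊓ Subgroup.map (MulAut.conj η).toMonoidHom L ↔
      ∃ h : GL (Fin 3) ℤ_[2],
        Matrix.GeneralLinearGroup.map (PadicInt.Coe.ringHom : ℤ_[2] →+* ℚ_[2]) h = g ∧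
        ∀ i : Fin 3, i ≠ 0 → PadicInt.toZModPow 2 ((h : Matrix (Fin 3) (Fin 3) ℤ_[2]) i 0) = 0) ∧
    (Subgroup.map (MulAut.conj η).toMonoidHom L).relIndex L = 4 :=
  ⟨part1 η L hη hL, part2 η L hη hL⟩
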